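/- arXiv:2302.07686 — 2 statements merged into one kernel-verified Lean document; each statement's English description precedes it below -/
import Mathlib

section
/- Every quasifinite ℤ-set S all of whose points have nontrivial (i.e., proper) stabilizer in the sense that no point is fixed by all of ℤ — equivalently every orbit has size at least 2 — admits a ℤ-equivariant map to the quasifinite ℤ-set S_wt = ⨆_{p prime} ℤ/pℤ. In other words, S_wt is weakly terminal in the category of quasifinite ℤ-sets with proper isotropy. -/
/-- A `ℤ`-set is quasifinite if every stabilizer is cofinite (finite index) and the fixed-point
set of every cofinite subgroup is finite. -/
def IsQuasifiniteZ (S : Type*) [AddAction ℤ S] : Prop :=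
  (∀ s : S, (AddAction.stabilizer ℤ s).FiniteIndex) ∧
    ∀ H : AddSubgroup ℤ, H.FiniteIndex → {s : S | ∀ k ∈ H, k +ᵥ s = s}.Finite

/-- Every quasifinite `ℤ`-set with proper isotropy admits a `ℤ`-equivariant map to
`S_wt = ⨆_{p prime} ℤ/pℤ` (where `ℤ` acts on the target by translation in each summand). -/
theorem exists_equivariant_map_to_weaklyTerminal (S : Type*) [AddAction ℤ S]
    (hq : IsQuasifiniteZ S) (hp : ∀ s : S, ∃ k : ℤ, k +ᵥ s ≠ s) :
    ∃ f : S → Σ p : Nat.Primes, ZMod (p : ℕ),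
      ∀ (k : ℤ) (s : S),
        f (k +ᵥ s) = ⟨(f s).1, (f s).2 + (k : ZMod ((f s).1 : ℕ))⟩ := by
  classical
  obtain ⟨hfin, -⟩ := hq
  have hgen : ∀ s : S, ∃ g : ℤ, 2 ≤ g.natAbs ∧ ∀ k : ℤ, k +ᵥ s = s ↔ g ∣ k := by
    intro s
    obtain ⟨g, hg⟩ := Int.subgroup_cyclic (AddAction.stabilizer ℤ s)
    have hmem : ∀ k : ℤ, k +ᵥ s = s ↔ g ∣ k := by
      intro k
      constructor
      · intro h
        have hk : k ∈ AddAction.stabilizer ℤ s := h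
        rw [hg, AddSubgroup.mem_closure_singleton] at hk
        obtain ⟨n, hn⟩ := hk
        exact ⟨n, by rw [← hn, smul_eq_mul]; ring⟩
      · rintro ⟨n, rfl⟩
        have : g * n ∈ AddAction.stabilizer ℤ s := by
          rw [hg, AddSubgroup.mem_closure_singleton]
          exact ⟨n, by rw [smul_eq_mul]; ring⟩
        exact this
    refine ⟨g, ?_, hmem⟩
    have hg0 : g ≠ 0 := by
      intro h0
      subst h0
      have hb : AddAction.stabilizer ℤ s = ⊥ := by
        rw [hg]; simp
      have hidx := (hfin s).index_ne_zero
      rw [hb, AddSubgroup.index_bot, Nat.card_eq_zero_of_infinite] at hidx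
      exact hidx rfl
    have hg1 : g.natAbs ≠ 1 := by
      intro h1
      obtain ⟨k, hk⟩ := hp s
      exact hk ((hmem k).mpr (Int.isUnit_iff_natAbs_eq.mpr h1).dvd)
    omega
  set g : S → ℤ := fun s => (hgen s).choose with hgdef
  have hg2 : ∀ s, 2 ≤ (g s).natAbs := fun s => (hgen s).choose_spec.1
  have hgdvd : ∀ s, ∀ k : ℤ, k +ᵥ s = s ↔ g s ∣ k := fun s => (hgen s).choose_spec.2
  set r : S → S := fun s => (Quotient.mk (AddAction.orbitRel ℤ S) s).out with hrdef
  have hrel : ∀ s : S, ∃ k : ℤ, k +ᵥ r s = s := by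
    intro s
    have h := Quotient.mk_out (s := AddAction.orbitRel ℤ S) s
    have h2 : s ∈ AddAction.orbit ℤ (r s) := (AddAction.orbitRel ℤ S).iseqv.symm h
    exact AddAction.mem_orbit_iff.mp h2
  set c : S → ℤ := fun s => (hrel s).choose with hcdef
  have hc : ∀ s, c s +ᵥ r s = s := fun s => (hrel s).choose_spec
  have hPprime : ∀ s, ((g (r s)).natAbs.minFac).Prime := fun s =>
    Nat.minFac_prime (by have := hg2 (r s); omega)
  set P : S → Nat.Primes := fun s => ⟨(g (r s)).natAbs.minFac, hPprime s⟩ with hPdef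
  refine ⟨fun s => ⟨P s, ((c s : ℤ) : ZMod ((P s : ℕ)))⟩, ?_⟩
  intro k s
  have hr : r (k +ᵥ s) = r s := by
    have hmk : Quotient.mk (AddAction.orbitRel ℤ S) (k +ᵥ s)
        = Quotient.mk (AddAction.orbitRel ℤ S) s :=
      Quotient.sound (AddAction.mem_orbit s k)
    simp only [hrdef, hmk]
  have hP : P (k +ᵥ s) = P s := Subtype.ext (by
    show (g (r (k +ᵥ s))).natAbs.minFac = (g (r s)).natAbs.minFac; rw [hr])
  have hdvd : ((P s : ℕ) : ℤ) ∣ c (k +ᵥ s) - (c s + k) := by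
    have e1 : c (k +ᵥ s) +ᵥ r s = k +ᵥ s := by rw [← hr]; exact hc (k +ᵥ s)
    have e2 : (c s + k) +ᵥ r s = k +ᵥ s := by rw [add_comm, add_vadd, hc s]
    have h1 : (c (k +ᵥ s) - (c s + k)) +ᵥ (r s) = r s := by
      rw [sub_eq_neg_add, add_vadd, e1, ← e2, ← add_vadd, neg_add_cancel, zero_vadd]
    have h2 := (hgdvd (r s) _).mp h1
    have h3 : ((P s : ℕ) : ℤ) ∣ ((g (r s)).natAbs : ℤ) :=
      Int.natCast_dvd_natCast.mpr (Nat.minFac_dvd _)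
    exact (h3.trans (Int.natAbs_dvd.mpr dvd_rfl)).trans h2
  have hzmod : ((c (k +ᵥ s) : ℤ) : ZMod ((P s : ℕ)))
      = ((c s + k : ℤ) : ZMod ((P s : ℕ))) := by
    rw [ZMod.intCast_eq_intCast_iff]
    exact (Int.modEq_iff_dvd.mpr hdvd).symm
  show (⟨P (k +ᵥ s), ((c (k +ᵥ s) : ℤ) : ZMod ((P (k +ᵥ s) : ℕ)))⟩ :
      Σ p : Nat.Primes, ZMod (p : ℕ)) = _
  rw [hP, hzmod]
  push_cast
  rfl
end

section
/- Let … → S₂ → S₁ → S₀ be a sequence of proper ℤ-equivariant maps between nonempty quasifinite ℤ-sets, where a map f is proper if for every x the stabilizer of f(x) strictly contains the stabilizer of x. Then every point of S_i has stabilizer of index at least 2^i in ℤ, and consequently the disjoint union ⨆_{i ≥ 1} S_i is again a quasifinite ℤ-set. -/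
/-- The `ℤ`-action on a disjoint union of `ℤ`-sets. -/
def sigmaAddAction (S : ℕ → Type*) [∀ i, AddAction ℤ (S i)] :
    AddAction ℤ (Σ i, S i) where
  vadd m x := ⟨x.1, m +ᵥ x.2⟩
  zero_vadd := by
    rintro ⟨i, x⟩
    exact congrArg (Sigma.mk i) (zero_vadd ℤ x)
  add_vadd a b := by
    rintro ⟨i, x⟩
    exact congrArg (Sigma.mk i) (add_vadd a b x)

theorem proper_tower_quasifinite (S : ℕ → Type*) [∀ i, AddAction ℤ (S i)]
    (hq : ∀ i, IsQuasifiniteZ (S i)) (hne : ∀ i, Nonempty (S i))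
    (f : ∀ i, S (i + 1) → S i)
    (hfe : ∀ (i : ℕ) (k : ℤ) (x : S (i + 1)), f i (k +ᵥ x) = k +ᵥ f i x)
    (hfp : ∀ (i : ℕ) (x : S (i + 1)),
      AddAction.stabilizer ℤ x < AddAction.stabilizer ℤ (f i x)) :
    (∀ (i : ℕ) (x : S i), 2 ^ i ≤ (AddAction.stabilizer ℤ x).index) ∧
      @IsQuasifiniteZ (Σ i, S i) (sigmaAddAction S) := by
  letI := sigmaAddAction S
  have key : ∀ (i : ℕ) (x : S i), 2 ^ i ≤ (AddAction.stabilizer ℤ x).index := by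
    intro i
    induction i with
    | zero =>
      intro x
      simpa using Nat.one_le_iff_ne_zero.mpr ((hq 0).1 x).index_ne_zero
    | succ i ih =>
      intro x
      have hlt := hfp i x
      have hfin : (AddAction.stabilizer ℤ x).index ≠ 0 := ((hq (i+1)).1 x).index_ne_zero
      have h1 := AddSubgroup.relIndex_mul_index hlt.le
      have hne1 : (AddAction.stabilizer ℤ x).relIndex (AddAction.stabilizer ℤ (f i x)) ≠ 1 := by
        intro h
        exact absurd (AddSubgroup.relIndex_eq_one.mp h) hlt.not_ge
      have hne0 : (AddAction.stabilizer ℤ x).relIndex (AddAction.stabilizer ℤ (f i x)) ≠ 0 := by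
        intro h
        rw [h, zero_mul] at h1
        exact hfin h1.symm
      have h2 : 2 ≤ (AddAction.stabilizer ℤ x).relIndex (AddAction.stabilizer ℤ (f i x)) := by
        omega
      calc 2 ^ (i + 1) = 2 * 2 ^ i := by ring
        _ ≤ (AddAction.stabilizer ℤ x).relIndex (AddAction.stabilizer ℤ (f i x)) *
              (AddAction.stabilizer ℤ (f i x)).index := Nat.mul_le_mul h2 (ih (f i x))
        _ = (AddAction.stabilizer ℤ x).index := h1
  refine ⟨key, ?_, ?_⟩
  · rintro ⟨i, x⟩
    have hstab : AddAction.stabilizer ℤ (⟨i, x⟩ : Σ i, S i) = AddAction.stabilizer ℤ x := by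
      ext k
      simp only [AddAction.mem_stabilizer_iff]
      constructor
      · intro h
        exact eq_of_heq (Sigma.mk.inj_iff.mp h).2
      · intro h
        exact congrArg (Sigma.mk i) h
    rw [hstab]
    exact (hq i).1 x
  · intro H hH
    apply Set.Finite.subset
      (Set.Finite.biUnion (Finset.range H.index).finite_toSet
        (fun i _ => ((hq i).2 H hH).image (Sigma.mk i)))
    rintro ⟨i, x⟩ hs
    have hx : ∀ k ∈ H, k +ᵥ x = x := fun k hk =>
      eq_of_heq (Sigma.mk.inj_iff.mp (hs k hk)).2
    have hHle : H ≤ AddAction.stabilizer ℤ x := fun k hk => hx k hk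
    have h2 : 2 ^ i ≤ H.index :=
      le_trans (key i x)
        (Nat.le_of_dvd (Nat.pos_of_ne_zero hH.index_ne_zero) (AddSubgroup.index_dvd_of_le hHle))
    have hi : i < H.index := lt_of_lt_of_le (Nat.lt_two_pow_self (n := i)) h2
    exact Set.mem_biUnion (Finset.mem_coe.mpr (Finset.mem_range.mpr hi)) ⟨x, hx, rfl⟩
end
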